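/- Let w be a word over Σ with ι(w) ≥ 1. The map s ↦ r(w^s) is eventually constant if and only if the map s ↦ ι(w^s) − ι(w^{s−1}) is eventually constant. -/

import Mathlib

open List

variable {α : Type*}

/-- `w` is `k`-universal: every word of length `k` over the alphabet `α`
is a scattered factor (subsequence) of `w`. -/
def IsUniversal [Fintype α] (k : ℕ) (w : List α) : Prop :=
  ∀ u : List α, u.length = k → u.Sublist w

/-- The universality index `ι(w)`: the largest `k` such that `w` is `k`-universal. -/
noncomputable def univIndex [Fintype α] (w : List α) : ℕ :=
  sSup {k | IsUniversal k w}

/-- The circular universality index `ζ(w)`: the largest `k` such that some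
conjugate of `w` is `k`-universal. -/
noncomputable def circIndex [Fintype α] (w : List α) : ℕ :=
  sSup {k | ∃ u v : List α, w = u ++ v ∧ IsUniversal k (v ++ u)}

/-- `wpow w s = w^s`, the `s`-fold concatenation of `w`. -/
def wpow (w : List α) (s : ℕ) : List α := (List.replicate s w).flatten

/-- Auxiliary (fuelled) computation of the remainder of the arch factorisation:
greedily remove the shortest prefix containing every letter of the alphabet. -/
def remAux [Fintype α] [DecidableEq α] : ℕ → List α → List α
  | 0, w => w
  | (n+1), w =>
    match (List.range' 1 w.length).find?
        (fun m => decide ((w.take m).toFinset = Finset.univ)) with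
    | none => w
    | some m => remAux n (w.drop m)

/-- `rem w = r(w)`, the remainder of the arch factorisation of `w`. -/
def rem [Fintype α] [DecidableEq α] (w : List α) : List α := remAux w.length w

/-- Auxiliary (fuelled) computation of the list of arches of `w`. -/
def archesAux [Fintype α] [DecidableEq α] : ℕ → List α → List (List α)
  | 0, _ => []
  | (n+1), w =>
    match (List.range' 1 w.length).find?
        (fun m => decide ((w.take m).toFinset = Finset.univ)) with
    | none => []
    | some m => (w.take m) :: archesAux n (w.drop m)

/-- `arches w`: the list `[arch₁(w), …, arch_{ι(w)}(w)]` of arches of `w`. -/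
def arches [Fintype α] [DecidableEq α] (w : List α) : List (List α) :=
  archesAux w.length w

section ArchMachinery

variable [Fintype α] [DecidableEq α]

theorem toFinset_nil_ne_univ (hne : Nonempty α) :
    (([] : List α).toFinset) ≠ Finset.univ := by
  simp only [List.toFinset_nil]
  exact fun hh => (Finset.univ_nonempty (α := α)).ne_empty hh.symm

theorem find?_arch_none {w : List α} (hne : Nonempty α)
    (h : (List.range' 1 w.length).find?
        (fun m => decide ((w.take m).toFinset = Finset.univ)) = none) :
    w.toFinset ≠ Finset.univ := by
  rw [List.find?_eq_none] at h
  rcases Nat.eq_zero_or_pos w.length with h0 | hpos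
  · rw [List.length_eq_zero_iff.mp h0]
    exact toFinset_nil_ne_univ hne
  · have := h w.length (by rw [List.mem_range'_1]; omega)
    simpa using this

theorem find?_arch_some {w : List α} {m : ℕ} (hne : Nonempty α)
    (h : (List.range' 1 w.length).find?
        (fun m => decide ((w.take m).toFinset = Finset.univ)) = some m) :
    1 ≤ m ∧ m ≤ w.length ∧ (w.take m).toFinset = Finset.univ ∧
      ∀ m', m' < m → (w.take m').toFinset ≠ Finset.univ := by
  have hmem := List.mem_of_find?_eq_some h
  rw [List.mem_range'_1] at hmem
  rw [List.find?_eq_some_iff_getElem] at h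
  obtain ⟨hp, i, hi, hieq, hmin⟩ := h
  rw [List.getElem_range'] at hieq
  simp only [List.length_range'] at hi
  refine ⟨hmem.1, by omega, by simpa using hp, ?_⟩
  intro m' hm'
  rcases Nat.eq_zero_or_pos m' with rfl | hm'pos
  · simpa using toFinset_nil_ne_univ hne
  · have := hmin (m' - 1) (by omega)
    rw [List.getElem_range'] at this
    have h2 : ¬ ((w.take (1 + (m'-1))).toFinset = Finset.univ) := by simpa using this
    convert h2 using 3
    omega

inductive ArchFact : List α → List (List α) → List α → Prop
  | nil (r : List α) (h : r.toFinset ≠ Finset.univ) : ArchFact r [] r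
  | cons (a v : List α) (l : List (List α)) (r : List α)
      (ha : a ≠ []) (hfull : a.toFinset = Finset.univ)
      (hmin : a.dropLast.toFinset ≠ Finset.univ)
      (ht : ArchFact v l r) : ArchFact (a ++ v) (a :: l) r

theorem archFact_computes (hne : Nonempty α) :
    ∀ n (w : List α), w.length ≤ n → ArchFact w (archesAux n w) (remAux n w) := by
  intro n
  induction n with
  | zero =>
    intro w hw
    rw [List.length_eq_zero_iff.mp (Nat.le_zero.mp hw)]
    exact ArchFact.nil [] (toFinset_nil_ne_univ hne)
  | succ n ih =>
    intro w hw
    rw [archesAux, remAux]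
    cases hfind : (List.range' 1 w.length).find?
        (fun m => decide ((w.take m).toFinset = Finset.univ)) with
    | none => exact ArchFact.nil w (find?_arch_none hne hfind)
    | some m =>
      obtain ⟨hm1, hmlen, hfull, hmin⟩ := find?_arch_some hne hfind
      have hlt : (w.take m).length = m := by simp [Nat.min_eq_left hmlen]
      have harch : ArchFact (w.take m ++ w.drop m)
          (w.take m :: archesAux n (w.drop m)) (remAux n (w.drop m)) := by
        refine ArchFact.cons _ _ _ _ ?_ hfull ?_ (ih _ ?_)
        · intro h0; rw [h0] at hlt; simp at hlt; omega
        · have : (w.take m).dropLast = w.take (m - 1) := by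
            rw [List.dropLast_eq_take, hlt, List.take_take]
            congr 1
            omega
          rw [this]
          exact hmin _ (by omega)
        · rw [List.length_drop]; omega
      rwa [List.take_append_drop] at harch

theorem toFinset_ne_univ_of_prefix_dropLast {a a' : List α}
    (hpre : a <+: a') (hlt : a.length < a'.length)
    (hmin : a'.dropLast.toFinset ≠ Finset.univ) (hfull : a.toFinset = Finset.univ) :
    False := by
  have hpre' : a <+: a'.dropLast := by
    obtain ⟨t, rfl⟩ := hpre
    have ht : t ≠ [] := by
      intro h0; rw [h0] at hlt; simp at hlt
    obtain ⟨c, t', rfl⟩ := List.exists_cons_of_ne_nil ht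
    rw [List.dropLast_append_cons]
    exact ⟨(c :: t').dropLast, rfl⟩
  apply hmin
  apply Finset.eq_univ_of_forall
  intro x
  have hx : x ∈ a.toFinset := by rw [hfull]; exact Finset.mem_univ x
  rw [List.mem_toFinset] at hx ⊢
  exact hpre'.sublist.subset hx

theorem toFinset_append_univ_left {a v : List α} (hfull : a.toFinset = Finset.univ) :
    (a ++ v).toFinset = Finset.univ := by
  rw [List.toFinset_append, hfull]
  simp

theorem arch_head_eq {a a' v v' : List α}
    (heq : a ++ v = a' ++ v')
    (hfull : a.toFinset = Finset.univ) (hfull' : a'.toFinset = Finset.univ)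
    (hmin : a.dropLast.toFinset ≠ Finset.univ)
    (hmin' : a'.dropLast.toFinset ≠ Finset.univ) : a = a' := by
  have hp : a <+: (a' ++ v') := heq ▸ List.prefix_append a v
  have hp' : a' <+: (a' ++ v') := List.prefix_append a' v'
  rcases Nat.le_or_le a.length a'.length with hle | hle
  · have hpre : a <+: a' := List.prefix_of_prefix_length_le hp hp' hle
    rcases Nat.lt_or_ge a.length a'.length with hlt | hge
    · exact absurd (toFinset_ne_univ_of_prefix_dropLast hpre hlt hmin' hfull) id
    · exact List.Sublist.eq_of_length hpre.sublist (by omega)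
  · have hpre : a' <+: a := List.prefix_of_prefix_length_le hp' hp hle
    rcases Nat.lt_or_ge a'.length a.length with hlt | hge
    · exact absurd (toFinset_ne_univ_of_prefix_dropLast hpre hlt hmin hfull') id
    · exact (List.Sublist.eq_of_length hpre.sublist (by omega)).symm

theorem ArchFact.unique {w : List α} {l l' : List (List α)} {r r' : List α}
    (h : ArchFact w l r) (h' : ArchFact w l' r') : l = l' ∧ r = r' := by
  induction h generalizing l' r' with
  | nil r hr =>
    cases h' with
    | nil => exact ⟨rfl, rfl⟩
    | cons a v l r ha hfull hmin ht =>
      exact absurd (toFinset_append_univ_left hfull) hr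
  | cons a v l r ha hfull hmin ht ih =>
    generalize heq : a ++ v = w0 at h'
    cases h' with
    | nil _ hr' => exact absurd (heq ▸ toFinset_append_univ_left hfull) hr'
    | cons a' v' l'' r'' ha' hfull' hmin' ht' =>
      have hae : a = a' := arch_head_eq heq hfull hfull' hmin hmin'
      subst hae
      have hv : v = v' := List.append_cancel_left heq
      subst hv
      obtain ⟨h1, h2⟩ := ih ht'
      exact ⟨by rw [h1], h2⟩

theorem ArchFact.append_fact {x y : List α} {l l' : List (List α)} {r r' : List α}
    (h : ArchFact x l r) (h' : ArchFact (r ++ y) l' r') :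
    ArchFact (x ++ y) (l ++ l') r' := by
  induction h with
  | nil r hr => exact h'
  | cons a v l r ha hfull hmin ht ih =>
    rw [List.append_assoc, List.cons_append]
    exact ArchFact.cons _ _ _ _ ha hfull hmin (ih h')

theorem ArchFact.mono {x' : List α} {l' : List (List α)} {r' : List α}
    (h' : ArchFact x' l' r') :
    ∀ x l r, ArchFact x l r → x <:+ x' →
      l.length ≤ l'.length ∧ (l.length = l'.length → r <:+ r') := by
  induction h' with
  | nil r' hr' =>
    intro x l r h hs
    cases h with
    | nil _ hrx => exact ⟨le_refl _, fun _ => hs⟩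
    | cons a v l0 r0 ha hfull hmin ht =>
      refine absurd (Finset.eq_univ_of_forall fun c => ?_) hr'
      have hc : c ∈ (a ++ v).toFinset := by
        rw [toFinset_append_univ_left hfull]; exact Finset.mem_univ c
      exact List.mem_toFinset.mpr (hs.sublist.subset (List.mem_toFinset.mp hc))
  | cons a' v' l'' r'' ha' hfull' hmin' ht' ih =>
    intro x l r h hs
    cases h with
    | nil _ hrx =>
      refine ⟨Nat.zero_le _, fun he => ?_⟩
      simp at he
    | cons a v l0 r0 ha hfull hmin ht =>
      obtain ⟨z, hz⟩ := hs
      -- hz : z ++ (a ++ v) = a' ++ v'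
      have hlen : a'.length ≤ z.length + a.length := by
        by_contra hcon
        push_neg at hcon
        have hp1 : (z ++ a) <+: (a' ++ v') := by
          refine ⟨v, ?_⟩
          rw [← hz, List.append_assoc]
        have hp2 : a' <+: (a' ++ v') := List.prefix_append a' v'
        have hpre : (z ++ a) <+: a' :=
          List.prefix_of_prefix_length_le hp1 hp2 (by simp; omega)
        have hzafull : (z ++ a).toFinset = Finset.univ := by
          rw [List.toFinset_append, hfull]
          simp
        exact toFinset_ne_univ_of_prefix_dropLast hpre (by simp; omega) hmin' hzafull
      have hvv' : v <:+ v' := by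
        have hv : v = (a' ++ v').drop (z.length + a.length) := by
          rw [← hz, ← List.length_append (as := z) (bs := a), ← List.append_assoc, List.drop_left]
        have hv2 : v'.drop (z.length + a.length - a'.length) = v := by
          conv_lhs => rw [show v' = (a' ++ v').drop a'.length from (List.drop_left (l₁ := a') (l₂ := v')).symm]
          rw [List.drop_drop, hv]
          congr 1
          omega
        exact hv2 ▸ List.drop_suffix _ _
      obtain ⟨h1, h2⟩ := ih v l0 r ht hvv'
      refine ⟨by simpa using h1, fun he => h2 ?_⟩
      simpa using he

theorem ArchFact.isUniversal' {w : List α} {l : List (List α)} {r : List α}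
    (h : ArchFact w l r) : ∀ u : List α, u.length = l.length → u.Sublist w := by
  induction h with
  | nil r hr =>
    intro u hu
    rw [List.length_eq_zero_iff.mp hu]
    exact List.nil_sublist _
  | cons a v l r ha hfull hmin ht ih =>
    intro u hu
    obtain ⟨c, u', rfl⟩ := List.exists_cons_of_ne_nil
      (show u ≠ [] by intro h0; rw [h0] at hu; simp at hu)
    have hc : [c] <+ a := List.singleton_sublist.mpr
      (List.mem_toFinset.mp (by rw [hfull]; exact Finset.mem_univ c))
    have hu' : u' <+ v := ih u' (by simpa using hu)
    simpa using List.Sublist.append hc hu'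

/-- if `x` occurs in `p` only as... helper: (x :: u) <+ (p ++ x :: v), x ∉ p → u <+ v -/
theorem sublist_helper {x : α} {u p v : List α} (hx : x ∉ p) :
    (x :: u) <+ (p ++ x :: v) → u <+ v := by
  induction p with
  | nil =>
    intro h
    rw [List.nil_append] at h
    exact List.cons_sublist_cons.mp h
  | cons c p' ih =>
    intro h
    rw [List.cons_append] at h
    cases h with
    | cons _ h' => exact ih (by simp at hx; exact hx.2) h'
    | cons_cons _ h' =>
      simp at hx

theorem ArchFact.exists_not_sublist {w : List α} {l : List (List α)} {r : List α}
    (h : ArchFact w l r) {b : α} (hb : b ∉ r.toFinset) :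
    ∃ u : List α, u.length = l.length + 1 ∧ ¬ u.Sublist w := by
  induction h with
  | nil r hr =>
    refine ⟨[b], by simp, fun hcon => ?_⟩
    exact hb (List.mem_toFinset.mpr (List.singleton_sublist.mp hcon))
  | cons a v l r ha hfull hmin ht ih =>
    obtain ⟨u, hlen, hnot⟩ := ih hb
    set x := a.getLast ha with hx
    have hxa : a.dropLast ++ [x] = a := List.dropLast_append_getLast ha
    have hxd : x ∉ a.dropLast := by
      intro hmem
      apply hmin
      apply Finset.eq_univ_of_forall
      intro c
      have hc : c ∈ a := List.mem_toFinset.mp (by rw [hfull]; exact Finset.mem_univ c)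
      rw [← hxa, List.mem_append] at hc
      rw [List.mem_toFinset]
      rcases hc with hc | hc
      · exact hc
      · simp at hc; rwa [hc]
    refine ⟨x :: u, by simp [hlen], fun hcon => ?_⟩
    rw [← hxa, List.append_assoc, List.singleton_append] at hcon
    exact hnot (sublist_helper hxd hcon)

theorem isUniversal_mono {w : List α} {j k : ℕ} (hk : IsUniversal k w) (hj : j ≤ k) :
    IsUniversal j w := by
  intro u hu
  match u, hu with
  | [], _ => exact List.nil_sublist _
  | (c :: u'), hu =>
    have h2 : (List.replicate (k - j) c ++ (c :: u')).length = k := by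
      simp only [List.length_cons] at hu
      simp
      omega
    exact (List.sublist_append_right _ _).trans (hk _ h2)

theorem ArchFact.rem_not_univ {w : List α} {l : List (List α)} {r : List α}
    (h : ArchFact w l r) : r.toFinset ≠ Finset.univ := by
  induction h with
  | nil _ hr => exact hr
  | cons _ _ _ _ _ _ _ _ ih => exact ih

theorem ArchFact.univIndex_eq {w : List α} {l : List (List α)} {r : List α}
    (h : ArchFact w l r) : univIndex w = l.length := by
  obtain ⟨b, hb⟩ : ∃ b, b ∉ r.toFinset := by
    by_contra hcon
    push_neg at hcon
    exact h.rem_not_univ (Finset.eq_univ_of_forall hcon)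
  obtain ⟨u, hulen, hunot⟩ := h.exists_not_sublist hb
  have hset : {k | IsUniversal k w} = Set.Iic l.length := by
    ext k
    simp only [Set.mem_setOf_eq, Set.mem_Iic]
    constructor
    · intro hk
      by_contra hcon
      push_neg at hcon
      exact hunot (isUniversal_mono hk hcon (u := u) hulen)
    · intro hk
      exact isUniversal_mono h.isUniversal' hk
  rw [univIndex, hset, csSup_Iic]

omit [Fintype α] [DecidableEq α] in
theorem suffix_of_suffix_len_le {r₁ r₂ v : List α}
    (h₁ : r₁ <:+ v) (h₂ : r₂ <:+ v) (hl : r₁.length ≤ r₂.length) : r₁ <:+ r₂ := by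
  obtain ⟨t₁, ht₁⟩ := h₁
  obtain ⟨t₂, ht₂⟩ := h₂
  have e₁ : r₁ = v.drop t₁.length := by rw [← ht₁, List.drop_left]
  have e₂ : r₂ = v.drop t₂.length := by rw [← ht₂, List.drop_left]
  have hlen : t₂.length ≤ t₁.length := by
    have l1 := congrArg List.length ht₁
    have l2 := congrArg List.length ht₂
    simp at l1 l2
    omega
  have : r₂.drop (t₁.length - t₂.length) = r₁ := by
    rw [e₂, List.drop_drop, e₁]
    congr 1
    omega
  exact this ▸ List.drop_suffix _ _

theorem nat_chain_le (f : ℕ → ℕ) (t₀ : ℕ) (hstep : ∀ s, t₀ ≤ s → f s ≤ f (s + 1)) :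
    ∀ s s', t₀ ≤ s → s ≤ s' → f s ≤ f s' := by
  intro s s' hs hss'
  induction s' , hss' using Nat.le_induction with
  | base => exact le_refl _
  | succ n hn ih => exact ih.trans (hstep n (hs.trans hn))

theorem nat_chain_ge (f : ℕ → ℕ) (t₀ : ℕ) (hstep : ∀ s, t₀ ≤ s → f (s + 1) ≤ f s) :
    ∀ s s', t₀ ≤ s → s ≤ s' → f s' ≤ f s := by
  intro s s' hs hss'
  induction s' , hss' using Nat.le_induction with
  | base => exact le_refl _
  | succ n hn ih => exact (hstep n (hs.trans hn)).trans ih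

theorem event_const_of_mono (B : ℕ) :
    ∀ k t₀ (f : ℕ → ℕ), B - f t₀ ≤ k → (∀ s, t₀ ≤ s → f s ≤ f (s + 1)) →
      (∀ s, t₀ ≤ s → f s ≤ B) →
      ∃ s₁, t₀ ≤ s₁ ∧ ∀ s, s₁ ≤ s → f s = f s₁ := by
  intro k
  induction k with
  | zero =>
    intro t₀ f hk hstep hbd
    refine ⟨t₀, le_refl _, fun s hs => ?_⟩
    have h1 := nat_chain_le f t₀ hstep t₀ s (le_refl _) hs
    have h2 := hbd s hs
    have h3 := hbd t₀ (le_refl _)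
    omega
  | succ k ih =>
    intro t₀ f hk hstep hbd
    by_cases hall : ∀ s, t₀ ≤ s → f s = f t₀
    · exact ⟨t₀, le_refl _, fun s hs => (hall s hs)⟩
    · push_neg at hall
      obtain ⟨s', hs', hne⟩ := hall
      have hgt : f t₀ < f s' := by
        have := nat_chain_le f t₀ hstep t₀ s' (le_refl _) hs'
        omega
      obtain ⟨s₁, hs₁, hconst⟩ := ih s' f (by have := hbd s' hs'; omega)
        (fun s hs => hstep s (hs'.trans hs)) (fun s hs => hbd s (hs'.trans hs))
      exact ⟨s₁, hs'.trans hs₁, hconst⟩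

theorem event_const_of_anti :
    ∀ k t₀ (f : ℕ → ℕ), f t₀ ≤ k → (∀ s, t₀ ≤ s → f (s + 1) ≤ f s) →
      ∃ s₁, t₀ ≤ s₁ ∧ ∀ s, s₁ ≤ s → f s = f s₁ := by
  intro k
  induction k with
  | zero =>
    intro t₀ f hk hstep
    refine ⟨t₀, le_refl _, fun s hs => ?_⟩
    have h1 := nat_chain_ge f t₀ hstep t₀ s (le_refl _) hs
    omega
  | succ k ih =>
    intro t₀ f hk hstep
    by_cases hall : ∀ s, t₀ ≤ s → f s = f t₀
    · exact ⟨t₀, le_refl _, fun s hs => (hall s hs)⟩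
    · push_neg at hall
      obtain ⟨s', hs', hne⟩ := hall
      have hlt : f s' < f t₀ := by
        have := nat_chain_ge f t₀ hstep t₀ s' (le_refl _) hs'
        omega
      obtain ⟨s₁, hs₁, hconst⟩ := ih s' f (by omega)
        (fun s hs => hstep s (hs'.trans hs))
      exact ⟨s₁, hs'.trans hs₁, hconst⟩

theorem archFact_rem (hne : Nonempty α) (w : List α) :
    ArchFact w (arches w) (rem w) := archFact_computes hne w.length w (le_refl _)

omit [Fintype α] [DecidableEq α] in
theorem wpow_succ (w : List α) (s : ℕ) : wpow w (s + 1) = wpow w s ++ w := by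
  rw [wpow, wpow, List.replicate_succ']
  simp

theorem rem_wpow_step (hne : Nonempty α) (w : List α) (s : ℕ) :
    rem (wpow w (s + 1)) = rem (rem (wpow w s) ++ w) ∧
      (arches (wpow w (s + 1))).length =
        (arches (wpow w s)).length + (arches (rem (wpow w s) ++ w)).length := by
  have h1 := archFact_rem hne (wpow w s)
  have h2 := archFact_rem hne (rem (wpow w s) ++ w)
  have h3 := h1.append_fact h2
  rw [← wpow_succ] at h3
  obtain ⟨hl, hr⟩ := (archFact_rem hne (wpow w (s + 1))).unique h3
  exact ⟨hr, by rw [hl]; simp⟩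

theorem ArchFact.rem_suffix {w : List α} {l : List (List α)} {r : List α}
    (h : ArchFact w l r) : r <:+ w := by
  induction h with
  | nil _ _ => exact List.suffix_rfl
  | cons a v l r ha hfull hmin ht ih => exact ih.trans (List.suffix_append a v)

theorem rem_suffix_of_full (hne : Nonempty α) {w v : List α}
    (hfull : w.toFinset = Finset.univ) (hsuf : w <:+ v) :
    rem v <:+ w ∧ (rem v).length < w.length := by
  have h := archFact_rem hne v
  have hr : rem v <:+ v := h.rem_suffix
  have hlt : (rem v).length < w.length := by
    by_contra hcon
    push_neg at hcon
    have hws : w <:+ rem v := suffix_of_suffix_len_le hsuf hr hcon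
    apply h.rem_not_univ
    apply Finset.eq_univ_of_forall
    intro c
    have : c ∈ w := List.mem_toFinset.mp (by rw [hfull]; exact Finset.mem_univ c)
    exact List.mem_toFinset.mpr (hws.sublist.subset this)
  exact ⟨suffix_of_suffix_len_le hr hsuf hlt.le, hlt⟩


end ArchMachinery

theorem rem_eventually_const_iff_growth_eventually_const [Fintype α] [DecidableEq α]
    (w : List α) (hw : 1 ≤ univIndex w) :
    (∃ s₀ : ℕ, ∀ s : ℕ, s₀ ≤ s → rem (wpow w s) = rem (wpow w s₀)) ↔
      (∃ s₀ : ℕ, 1 ≤ s₀ ∧ ∀ s : ℕ, s₀ ≤ s →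
        univIndex (wpow w s) - univIndex (wpow w (s - 1)) =
          univIndex (wpow w s₀) - univIndex (wpow w (s₀ - 1))) := by
  -- α is nonempty
  have hne : Nonempty α := by
    by_contra hemp
    rw [not_nonempty_iff] at hemp
    have hall : ∀ k, IsUniversal k w := by
      intro k u hu
      cases u with
      | nil => exact List.nil_sublist _
      | cons c _ => exact (hemp.false c).elim
    have hnb : ¬ BddAbove {k | IsUniversal k w} := by
      rintro ⟨B, hB⟩
      have h1 := hB (show (B+1) ∈ {k | IsUniversal k w} from hall (B + 1))
      omega
    rw [univIndex, csSup_of_not_bddAbove hnb, csSup_empty] at hw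
    simp at hw
  have hbdd : BddAbove {k | IsUniversal k w} := by
    by_contra hnb
    rw [univIndex, csSup_of_not_bddAbove hnb, csSup_empty] at hw
    simp at hw
  have hmem : IsUniversal (univIndex w) w := by
    have h0 : (0 : ℕ) ∈ {k | IsUniversal k w} := by
      intro u hu
      rw [List.length_eq_zero_iff.mp hu]
      exact List.nil_sublist _
    exact Nat.sSup_mem ⟨0, h0⟩ hbdd
  have hfull : w.toFinset = Finset.univ := by
    apply Finset.eq_univ_of_forall
    intro c
    exact List.mem_toFinset.mpr
      (List.singleton_sublist.mp (isUniversal_mono hmem hw [c] rfl))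
  -- w as suffix of its powers
  have hwsuf : ∀ s : ℕ, 1 ≤ s → w <:+ wpow w s := by
    intro s hs
    obtain ⟨t, rfl⟩ : ∃ t, s = t + 1 := ⟨s - 1, by omega⟩
    rw [wpow_succ]
    exact List.suffix_append _ _
  -- remainders are short suffixes of w
  have hrs : ∀ s : ℕ, 1 ≤ s → rem (wpow w s) <:+ w ∧ (rem (wpow w s)).length < w.length :=
    fun s hs => rem_suffix_of_full hne hfull (hwsuf s hs)
  -- growth of univIndex
  have hgrow : ∀ s : ℕ, univIndex (wpow w (s + 1)) =
      univIndex (wpow w s) + (arches (rem (wpow w s) ++ w)).length := by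
    intro s
    rw [(archFact_rem hne (wpow w (s+1))).univIndex_eq,
      (archFact_rem hne (wpow w s)).univIndex_eq]
    exact (rem_wpow_step hne w s).2
  have hdiff : ∀ s : ℕ, univIndex (wpow w (s + 1)) - univIndex (wpow w s) =
      (arches (rem (wpow w s) ++ w)).length := by
    intro s
    rw [hgrow s]
    omega
  constructor
  · rintro ⟨s₀, h⟩
    refine ⟨s₀ + 2, by omega, ?_⟩
    intro s hs
    have key : ∀ t : ℕ, s₀ ≤ t → univIndex (wpow w (t + 1)) - univIndex (wpow w t) =
        (arches (rem (wpow w s₀) ++ w)).length := by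
      intro t ht
      rw [hdiff t, h t ht]
    have e1 : univIndex (wpow w s) - univIndex (wpow w (s - 1)) =
        (arches (rem (wpow w s₀) ++ w)).length := by
      have := key (s - 1) (by omega)
      rwa [show s - 1 + 1 = s by omega] at this
    have e2 : univIndex (wpow w (s₀ + 2)) - univIndex (wpow w (s₀ + 2 - 1)) =
        (arches (rem (wpow w s₀) ++ w)).length := by
      have := key (s₀ + 1) (by omega)
      rwa [show s₀ + 2 - 1 = s₀ + 1 by omega]
    rw [e1, e2]
  · rintro ⟨s₀, hs₀1, h⟩
    -- the per-copy growth is constant from s₀ - 1 on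
    have hd : ∀ t : ℕ, s₀ - 1 ≤ t → (arches (rem (wpow w t) ++ w)).length =
        (arches (rem (wpow w (s₀ - 1)) ++ w)).length := by
      intro t ht
      have h1 := h (t + 1) (by omega)
      rw [show t + 1 - 1 = t from rfl] at h1
      have h2 : univIndex (wpow w s₀) - univIndex (wpow w (s₀ - 1)) =
          (arches (rem (wpow w (s₀ - 1)) ++ w)).length := by
        have := hdiff (s₀ - 1)
        rwa [show s₀ - 1 + 1 = s₀ by omega] at this
      rw [hdiff t] at h1
      rw [h1, h2]
    set t₀ := max s₀ 1 with ht₀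
    -- monotone step transfer
    have M : ∀ s s' : ℕ, t₀ ≤ s → t₀ ≤ s' →
        (rem (wpow w s)).length ≤ (rem (wpow w s')).length →
        (rem (wpow w (s + 1))).length ≤ (rem (wpow w (s' + 1))).length := by
      intro s s' hs hs' hle
      have hx := hrs s (le_trans (le_max_right _ _) hs)
      have hx' := hrs s' (le_trans (le_max_right _ _) hs')
      have hxx' : rem (wpow w s) <:+ rem (wpow w s') :=
        suffix_of_suffix_len_le hx.1 hx'.1 hle
      obtain ⟨z, hz⟩ := hxx'
      have hsufw : rem (wpow w s) ++ w <:+ rem (wpow w s') ++ w :=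
        ⟨z, by rw [← List.append_assoc, hz]⟩
      have h1 := archFact_rem hne (rem (wpow w s) ++ w)
      have h2 := archFact_rem hne (rem (wpow w s') ++ w)
      obtain ⟨hcle, hceq⟩ := h2.mono _ _ _ h1 hsufw
      have hceq' : (arches (rem (wpow w s) ++ w)).length =
          (arches (rem (wpow w s') ++ w)).length := by
        rw [hd s (by omega), hd s' (by omega)]
      have hsufr := hceq hceq'
      rw [← (rem_wpow_step hne w s).1, ← (rem_wpow_step hne w s').1] at hsufr
      exact hsufr.length_le
    -- the sequence of remainder lengths is monotone from t₀ + something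
    have hfin : ∃ s₁, t₀ ≤ s₁ ∧ ∀ s, s₁ ≤ s →
        (rem (wpow w s)).length = (rem (wpow w s₁)).length := by
      rcases le_total ((rem (wpow w t₀)).length) ((rem (wpow w (t₀ + 1))).length)
        with hc | hc
      · have hstep : ∀ s, t₀ ≤ s →
            (rem (wpow w s)).length ≤ (rem (wpow w (s + 1))).length := by
          intro s hs
          induction s, hs using Nat.le_induction with
          | base => exact hc
          | succ n hn ih => exact M n (n + 1) hn (by omega) ih
        obtain ⟨s₁, hs₁, hcst⟩ := event_const_of_mono w.length w.length t₀
          (fun s => (rem (wpow w s)).length) (by omega) hstep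
          (fun s hs => (hrs s (le_trans (le_max_right _ _) hs)).2.le)
        exact ⟨s₁, hs₁, fun s hs => hcst s hs⟩
      · have hstep : ∀ s, t₀ ≤ s →
            (rem (wpow w (s + 1))).length ≤ (rem (wpow w s)).length := by
          intro s hs
          induction s, hs using Nat.le_induction with
          | base => exact hc
          | succ n hn ih => exact M (n + 1) n (by omega) hn ih
        obtain ⟨s₁, hs₁, hcst⟩ := event_const_of_anti ((rem (wpow w t₀)).length) t₀
          (fun s => (rem (wpow w s)).length) (le_refl _) hstep
        exact ⟨s₁, hs₁, fun s hs => hcst s hs⟩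
    obtain ⟨s₁, hs₁, hcst⟩ := hfin
    refine ⟨s₁, ?_⟩
    intro s hs
    have hx := hrs s (le_trans (le_trans (le_max_right _ _) hs₁) hs)
    have hx₁ := hrs s₁ (le_trans (le_max_right _ _) hs₁)
    exact List.Sublist.eq_of_length
      (suffix_of_suffix_len_le hx.1 hx₁.1 (by rw [hcst s hs])).sublist (hcst s hs)
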